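/- Tightening: let M be a simple term of type A containing no existential variables. (1) If (Γ, x:C); Ω; Δ ⊢ M ↓ A, then either Γ; Ω; (Δ, x:C) ⊢ M ↓ A or Γ; (Ω, x:C); Δ ⊢ M ↓ A. (2) If (Γ, x:C); Ω; Δ ⊢ M ⇑ A, then either Γ; Ω; (Δ, x:C) ⊢ M ⇑ A or Γ; (Ω, x:C); Δ ⊢ M ⇑ A. That is, every simple term is either strict or vacuous in each of its unrestricted variables. -/
import Mathlib


/- A strict λ-calculus with strict (1), irrelevant (0) and unrestricted (u)
   function spaces, in locally nameless representation.  Contexts are finite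
   sets of (variable name, type) declarations, split into three zones
   Γ (unrestricted); Ω (irrelevant); Δ (strict). -/

/-- Labels `k ::= 1 | 0 | u`. -/
inductive Lab : Type
  | one
  | zero
  | un
deriving DecidableEq

/-- Types `A ::= a | A₁ →ᵏ A₂` over atomic types `a` (names in ℕ). -/
inductive Ty : Type
  | atom : ℕ → Ty
  | arr : Ty → Lab → Ty → Ty
deriving DecidableEq

/-- Terms `M ::= c | x | λxᵏ:A.M | M Nᵏ` (locally nameless: bound variables
    are de Bruijn indices, free variables/parameters are names). -/
inductive Tm : Type
  | const : ℕ → Tm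
  | bvar : ℕ → Tm
  | fvar : ℕ → Tm
  | lam : Lab → Ty → Tm → Tm
  | app : Tm → Lab → Tm → Tm
deriving DecidableEq

/-- Opening: replace the bound variable `k` by the term `u`. -/
def Tm.openRec (k : ℕ) (u : Tm) : Tm → Tm
  | .const c => .const c
  | .bvar i => if i = k then u else .bvar i
  | .fvar x => .fvar x
  | .lam l A M => .lam l A (Tm.openRec (k+1) u M)
  | .app M l N => .app (Tm.openRec k u M) l (Tm.openRec k u N)

/-- `M.open0 N` is the body `M` of an abstraction with its bound variable
    replaced by `N`; since free variables are named, this is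
    capture-avoiding substitution of the bound variable by construction. -/
def Tm.open0 (M u : Tm) : Tm := Tm.openRec 0 u M

/-- A context zone: a finite set of declarations `x : A`. -/
abbrev Ctx : Type := Finset (ℕ × Ty)

/-- The variables declared in a context. -/
def Ctx.names (Γ : Ctx) : Finset ℕ := Γ.image Prod.fst

/-- The typing judgment `Γ; Ω; Δ ⊢ M : A` of the strict λ-calculus,
    over a fixed signature `Sg` assigning types to constants
    (a function, so each constant is declared at most once). -/
inductive Typ (Sg : ℕ → Option Ty) : Ctx → Ctx → Ctx → Tm → Ty → Prop
  | con {Γ Ω : Ctx} {c : ℕ} {A : Ty} :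
      Sg c = some A → Typ Sg Γ Ω ∅ (.const c) A
  | idu {Γ Ω : Ctx} {x : ℕ} {A : Ty} :
      (x, A) ∈ Γ → Typ Sg Γ Ω ∅ (.fvar x) A
  | id1 {Γ Ω : Ctx} {x : ℕ} {A : Ty} :
      Typ Sg Γ Ω {(x, A)} (.fvar x) A
  | lamu {Γ Ω Δ : Ctx} {x : ℕ} {A B : Ty} {M : Tm} :
      x ∉ Ctx.names (Γ ∪ Ω ∪ Δ) →
      Typ Sg (insert (x, A) Γ) Ω Δ (Tm.open0 M (.fvar x)) B →
      Typ Sg Γ Ω Δ (.lam .un A M) (.arr A .un B)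
  | lam0 {Γ Ω Δ : Ctx} {x : ℕ} {A B : Ty} {M : Tm} :
      x ∉ Ctx.names (Γ ∪ Ω ∪ Δ) →
      Typ Sg Γ (insert (x, A) Ω) Δ (Tm.open0 M (.fvar x)) B →
      Typ Sg Γ Ω Δ (.lam .zero A M) (.arr A .zero B)
  | lam1 {Γ Ω Δ : Ctx} {x : ℕ} {A B : Ty} {M : Tm} :
      x ∉ Ctx.names (Γ ∪ Ω ∪ Δ) →
      Typ Sg Γ Ω (insert (x, A) Δ) (Tm.open0 M (.fvar x)) B →
      Typ Sg Γ Ω Δ (.lam .one A M) (.arr A .one B)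
  | appu {Γ Ω Δ : Ctx} {M N : Tm} {A B : Ty} :
      Typ Sg Γ Ω Δ M (.arr A .un B) →
      Typ Sg (Γ ∪ Δ) Ω ∅ N A →
      Typ Sg Γ Ω Δ (.app M .un N) B
  | app0 {Γ Ω Δ : Ctx} {M N : Tm} {A B : Ty} :
      Typ Sg Γ Ω Δ M (.arr A .zero B) →
      Typ Sg (Γ ∪ Ω ∪ Δ) ∅ ∅ N A →
      Typ Sg Γ Ω Δ (.app M .zero N) B
  | app1 {Γ Ω ΔM ΔN : Ctx} {M N : Tm} {A B : Ty} :
      Disjoint ΔM ΔN →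
      Typ Sg (Γ ∪ ΔN) Ω ΔM M (.arr A .one B) →
      Typ Sg (Γ ∪ ΔM) Ω ΔN N A →
      Typ Sg Γ Ω (ΔM ∪ ΔN) (.app M .one N) B

mutual
  /-- `Γ; Ω; Δ ⊢ M ↓ A` : `M` is atomic of type `A`. -/
  inductive Atom (Sg : ℕ → Option Ty) : Ctx → Ctx → Ctx → Tm → Ty → Prop
    | con {Γ Ω : Ctx} {c : ℕ} {A : Ty} :
        Sg c = some A → Atom Sg Γ Ω ∅ (.const c) A
    | idu {Γ Ω : Ctx} {x : ℕ} {A : Ty} :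
        (x, A) ∈ Γ → Atom Sg Γ Ω ∅ (.fvar x) A
    | id1 {Γ Ω : Ctx} {x : ℕ} {A : Ty} :
        Atom Sg Γ Ω {(x, A)} (.fvar x) A
    | appu {Γ Ω Δ : Ctx} {M N : Tm} {A B : Ty} :
        Atom Sg Γ Ω Δ M (.arr A .un B) →
        Canon Sg (Γ ∪ Δ) Ω ∅ N A →
        Atom Sg Γ Ω Δ (.app M .un N) B
    | app0 {Γ Ω Δ : Ctx} {M N : Tm} {A B : Ty} :
        Atom Sg Γ Ω Δ M (.arr A .zero B) →
        Canon Sg (Γ ∪ Ω ∪ Δ) ∅ ∅ N A →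
        Atom Sg Γ Ω Δ (.app M .zero N) B
    | app1 {Γ Ω ΔM ΔN : Ctx} {M N : Tm} {A B : Ty} :
        Disjoint ΔM ΔN →
        Atom Sg (Γ ∪ ΔN) Ω ΔM M (.arr A .one B) →
        Canon Sg (Γ ∪ ΔM) Ω ΔN N A →
        Atom Sg Γ Ω (ΔM ∪ ΔN) (.app M .one N) B

  /-- `Γ; Ω; Δ ⊢ M ⇑ A` : `M` is canonical of type `A`. -/
  inductive Canon (Sg : ℕ → Option Ty) : Ctx → Ctx → Ctx → Tm → Ty → Prop
    | atm {Γ Ω Δ : Ctx} {M : Tm} {a : ℕ} :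
        Atom Sg Γ Ω Δ M (.atom a) → Canon Sg Γ Ω Δ M (.atom a)
    | lamu {Γ Ω Δ : Ctx} {x : ℕ} {A B : Ty} {M : Tm} :
        x ∉ Ctx.names (Γ ∪ Ω ∪ Δ) →
        Canon Sg (insert (x, A) Γ) Ω Δ (Tm.open0 M (.fvar x)) B →
        Canon Sg Γ Ω Δ (.lam .un A M) (.arr A .un B)
    | lam0 {Γ Ω Δ : Ctx} {x : ℕ} {A B : Ty} {M : Tm} :
        x ∉ Ctx.names (Γ ∪ Ω ∪ Δ) →
        Canon Sg Γ (insert (x, A) Ω) Δ (Tm.open0 M (.fvar x)) B →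
        Canon Sg Γ Ω Δ (.lam .zero A M) (.arr A .zero B)
    | lam1 {Γ Ω Δ : Ctx} {x : ℕ} {A B : Ty} {M : Tm} :
        x ∉ Ctx.names (Γ ∪ Ω ∪ Δ) →
        Canon Sg Γ Ω (insert (x, A) Δ) (Tm.open0 M (.fvar x)) B →
        Canon Sg Γ Ω Δ (.lam .one A M) (.arr A .one B)
end

/-- `h M₁¹ … Mₙ¹`: a spine of strict applications. -/
def Tm.spine (h : Tm) (Ms : List Tm) : Tm :=
  Ms.foldl (fun t M => Tm.app t .one M) h

/-- Heads of simple terms: constants or variables. -/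
inductive SimpleHead : Tm → Prop
  | const (c : ℕ) : SimpleHead (.const c)
  | fvar (x : ℕ) : SimpleHead (.fvar x)
  | bvar (i : ℕ) : SimpleHead (.bvar i)

/-- Simple terms containing no existential variables:
    `M ::= λxᵘ:A.M | h M₁¹ … Mₙ¹`. -/
inductive IsSimple : Tm → Prop
  | lam {A : Ty} {M : Tm} : IsSimple M → IsSimple (.lam .un A M)
  | spine {h : Tm} {Ms : List Tm} :
      SimpleHead h → (∀ M ∈ Ms, IsSimple M) →
      IsSimple (Tm.spine h Ms)

namespace Tight

lemma names_union (Γ Δ : Ctx) : Ctx.names (Γ ∪ Δ) = Ctx.names Γ ∪ Ctx.names Δ :=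
  Finset.image_union _ _

lemma names_insert (p : ℕ × Ty) (Γ : Ctx) :
    Ctx.names (insert p Γ) = insert p.1 (Ctx.names Γ) :=
  Finset.image_insert _ _ _

lemma notMem_of_not_names {x : ℕ} {Γ : Ctx} {A : Ty} (h : x ∉ Ctx.names Γ) :
    (x, A) ∉ Γ := fun hm => h (Finset.mem_image_of_mem _ hm)

lemma mem_names {x : ℕ} {A : Ty} {Γ : Ctx} (h : (x, A) ∈ Γ) : x ∈ Ctx.names Γ :=
  Finset.mem_image_of_mem _ h

lemma spine_concat (h : Tm) (Ms : List Tm) (N : Tm) :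
    Tm.spine h (Ms ++ [N]) = .app (Tm.spine h Ms) .one N := by
  simp [Tm.spine]

lemma spine_shape (h : Tm) (Ms : List Tm) :
    (Tm.spine h Ms = h ∧ Ms = []) ∨
    ∃ Ms' N, Ms = Ms' ++ [N] ∧ Tm.spine h Ms = .app (Tm.spine h Ms') .one N := by
  induction Ms using List.reverseRecOn with
  | nil => exact Or.inl ⟨rfl, rfl⟩
  | append_singleton Ms' N _ => exact Or.inr ⟨Ms', N, rfl, spine_concat _ _ _⟩

lemma simple_lam_inv {l : Lab} {A : Ty} {M : Tm} (h : IsSimple (.lam l A M)) :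
    l = .un ∧ IsSimple M := by
  generalize hM : Tm.lam l A M = T at h
  cases h with
  | lam hM' => cases hM; exact ⟨rfl, hM'⟩
  | spine hh hMs =>
    rcases spine_shape _ ‹List Tm› with ⟨he, _⟩ | ⟨Ms', N, _, he⟩
    · rw [← hM] at he; subst he; cases hh
    · rw [← hM] at he; cases he

lemma simple_app_inv {l : Lab} {M N : Tm} (h : IsSimple (.app M l N)) :
    l = .one ∧ IsSimple M ∧ IsSimple N := by
  generalize hM : Tm.app M l N = T at h
  cases h with
  | lam _ => cases hM
  | spine hh hMs =>
    rcases spine_shape _ ‹List Tm› with ⟨he, hnil⟩ | ⟨Ms', N', hMs', he⟩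
    · rw [← hM] at he; subst he; cases hh
    · rw [← hM] at he
      cases he
      subst hMs'
      refine ⟨rfl, IsSimple.spine hh fun M hMm => hMs _ (by simp [hMm]), hMs _ (by simp)⟩

lemma openRec_spine (k : ℕ) (u h : Tm) (Ms : List Tm) :
    Tm.openRec k u (Tm.spine h Ms)
      = Tm.spine (Tm.openRec k u h) (Ms.map (Tm.openRec k u)) := by
  induction Ms generalizing h with
  | nil => rfl
  | cons M Ms ih =>
    show Tm.openRec k u (Tm.spine (.app h .one M) Ms)
      = Tm.spine (.app (Tm.openRec k u h) .one (Tm.openRec k u M)) (Ms.map _)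
    rw [ih]; rfl

lemma simpleHead_open {h : Tm} (hh : SimpleHead h) (k y : ℕ) :
    SimpleHead (Tm.openRec k (.fvar y) h) := by
  cases hh with
  | const c => exact .const c
  | fvar x => exact .fvar x
  | bvar i =>
    simp only [Tm.openRec]
    split
    · exact .fvar y
    · exact .bvar i

lemma isSimple_open {M : Tm} (h : IsSimple M) (y : ℕ) :
    ∀ k, IsSimple (Tm.openRec k (.fvar y) M) := by
  induction h with
  | lam _ ih => intro k; exact IsSimple.lam (ih (k + 1))
  | spine hh hMs ih =>
    intro k
    rw [openRec_spine]
    exact IsSimple.spine (simpleHead_open hh k y)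
      (by rintro M hM; rcases List.mem_map.mp hM with ⟨M', hM', rfl⟩; exact ih M' hM' k)

lemma isSimple_open0 {M : Tm} (h : IsSimple M) (y : ℕ) :
    IsSimple (Tm.open0 M (.fvar y)) := isSimple_open h y 0

def Q1 (Sg : ℕ → Option Ty) (Γ' Ω Δ : Ctx) (M : Tm) (A : Ty) : Prop :=
  ∀ (Γ : Ctx) (x : ℕ) (C : Ty), Γ' = insert (x, C) Γ →
    x ∉ Ctx.names (Γ ∪ Ω ∪ Δ) → IsSimple M →
    Atom Sg Γ Ω (insert (x, C) Δ) M A ∨ Atom Sg Γ (insert (x, C) Ω) Δ M A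

def Q2 (Sg : ℕ → Option Ty) (Γ' Ω Δ : Ctx) (M : Tm) (A : Ty) : Prop :=
  ∀ (Γ : Ctx) (x : ℕ) (C : Ty), Γ' = insert (x, C) Γ →
    x ∉ Ctx.names (Γ ∪ Ω ∪ Δ) → IsSimple M →
    Canon Sg Γ Ω (insert (x, C) Δ) M A ∨ Canon Sg Γ (insert (x, C) Ω) Δ M A

end Tight


namespace Tight

variable {Sg : ℕ → Option Ty}

lemma c_con {Γ Ω : Ctx} {c : ℕ} {A : Ty} (hc : Sg c = some A) :
    Q1 Sg Γ Ω ∅ (.const c) A :=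
  fun _ _ _ _ _ _ => Or.inr (Atom.con hc)

lemma c_idu {Γ' Ω : Ctx} {y : ℕ} {A : Ty} (hm : (y, A) ∈ Γ') :
    Q1 Sg Γ' Ω ∅ (.fvar y) A := by
  intro Γ x C hΓ hx hS
  subst hΓ
  rcases Finset.mem_insert.mp hm with heq | hmem
  · cases heq
    left
    rw [show insert (y, A) (∅ : Ctx) = {(y, A)} by rfl]
    exact Atom.id1
  · exact Or.inr (Atom.idu hmem)

lemma c_id1 {Γ' Ω : Ctx} {y : ℕ} {A : Ty} : Q1 Sg Γ' Ω {(y, A)} (.fvar y) A :=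
  fun _ _ _ _ _ _ => Or.inr Atom.id1

lemma c_appu {Γ' Ω Δ : Ctx} {M N : Tm} {B : Ty} :
    Q1 Sg Γ' Ω Δ (.app M .un N) B := by
  intro _ _ _ _ _ hS
  cases (simple_app_inv hS).1

lemma c_app0 {Γ' Ω Δ : Ctx} {M N : Tm} {B : Ty} :
    Q1 Sg Γ' Ω Δ (.app M .zero N) B := by
  intro _ _ _ _ _ hS
  cases (simple_app_inv hS).1

lemma c_app1 {Γ' Ω ΔM ΔN : Ctx} {M N : Tm} {A B : Ty}
    (hd : Disjoint ΔM ΔN)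
    (hM : Atom Sg (Γ' ∪ ΔN) Ω ΔM M (.arr A .one B))
    (hN : Canon Sg (Γ' ∪ ΔM) Ω ΔN N A)
    (ihM : Q1 Sg (Γ' ∪ ΔN) Ω ΔM M (.arr A .one B))
    (ihN : Q2 Sg (Γ' ∪ ΔM) Ω ΔN N A) :
    Q1 Sg Γ' Ω (ΔM ∪ ΔN) (.app M .one N) B := by
  intro Γ x C hΓ hx hS
  subst hΓ
  obtain ⟨-, hSM, hSN⟩ := simple_app_inv hS
  simp only [names_union, Finset.mem_union, not_or] at hx
  obtain ⟨⟨hx1, hx2⟩, hx3, hx4⟩ := hx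
  rcases ihN (Γ ∪ ΔM) x C (Finset.insert_union _ _ _)
      (by simp only [names_union, Finset.mem_union, not_or]; exact ⟨⟨⟨hx1, hx3⟩, hx2⟩, hx4⟩)
      hSN with hNs | hNo
  · left
    rw [show insert (x, C) (ΔM ∪ ΔN) = ΔM ∪ insert (x, C) ΔN from
      (Finset.union_insert _ _ _).symm]
    refine Atom.app1 ?_ ?_ hNs
    · exact Finset.disjoint_insert_right.mpr ⟨notMem_of_not_names hx3, hd⟩
    · rw [Finset.union_insert, ← Finset.insert_union]
      exact hM
  · rcases ihM (Γ ∪ ΔN) x C (Finset.insert_union _ _ _)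
        (by simp only [names_union, Finset.mem_union, not_or]; exact ⟨⟨⟨hx1, hx4⟩, hx2⟩, hx3⟩)
        hSM with hMs | hMo
    · left
      rw [show insert (x, C) (ΔM ∪ ΔN) = insert (x, C) ΔM ∪ ΔN from
        (Finset.insert_union _ _ _).symm]
      refine Atom.app1 ?_ hMs ?_
      · exact Finset.disjoint_insert_left.mpr ⟨notMem_of_not_names hx4, hd⟩
      · rw [Finset.union_insert, ← Finset.insert_union]
        exact hN
    · exact Or.inr (Atom.app1 hd hMo hNo)

lemma c_atm {Γ' Ω Δ : Ctx} {M : Tm} {a : ℕ}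
    (ih : Q1 Sg Γ' Ω Δ M (.atom a)) : Q2 Sg Γ' Ω Δ M (.atom a) := by
  intro Γ x C hΓ hx hS
  rcases ih Γ x C hΓ hx hS with h | h
  · exact Or.inl (Canon.atm h)
  · exact Or.inr (Canon.atm h)

lemma c_lamu {Γ' Ω Δ : Ctx} {y : ℕ} {A B : Ty} {M : Tm}
    (hy : y ∉ Ctx.names (Γ' ∪ Ω ∪ Δ))
    (ih : Q2 Sg (insert (y, A) Γ') Ω Δ (Tm.open0 M (.fvar y)) B) :
    Q2 Sg Γ' Ω Δ (.lam .un A M) (.arr A .un B) := by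
  intro Γ x C hΓ hx hS
  subst hΓ
  obtain ⟨-, hSM⟩ := simple_lam_inv hS
  have hSb := isSimple_open0 hSM y
  simp only [names_union, names_insert, Finset.mem_union, Finset.mem_insert, not_or] at hy hx
  obtain ⟨⟨⟨hyx, hy1⟩, hy2⟩, hy3⟩ := hy
  obtain ⟨⟨hx1, hx2⟩, hx3⟩ := hx
  rcases ih (insert (y, A) Γ) x C (Finset.insert_comm _ _ _)
      (by simp only [names_union, names_insert, Finset.mem_union, Finset.mem_insert, not_or]
          exact ⟨⟨⟨fun h => hyx h.symm, hx1⟩, hx2⟩, hx3⟩)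
      hSb with hb | hb
  · left
    refine Canon.lamu (x := y) ?_ hb
    simp only [names_union, names_insert, Finset.mem_union, Finset.mem_insert, not_or]
    exact ⟨⟨hy1, hy2⟩, hyx, hy3⟩
  · right
    refine Canon.lamu (x := y) ?_ hb
    simp only [names_union, names_insert, Finset.mem_union, Finset.mem_insert, not_or]
    exact ⟨⟨hy1, hyx, hy2⟩, hy3⟩

lemma c_lam0 {Γ' Ω Δ : Ctx} {A B : Ty} {M : Tm} :
    Q2 Sg Γ' Ω Δ (.lam .zero A M) (.arr A .zero B) := by
  intro _ _ _ _ _ hS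
  cases (simple_lam_inv hS).1

lemma c_lam1 {Γ' Ω Δ : Ctx} {A B : Ty} {M : Tm} :
    Q2 Sg Γ' Ω Δ (.lam .one A M) (.arr A .one B) := by
  intro _ _ _ _ _ hS
  cases (simple_lam_inv hS).1

lemma tight_atom {Γ' Ω Δ : Ctx} {M : Tm} {A : Ty}
    (h : Atom Sg Γ' Ω Δ M A) : Q1 Sg Γ' Ω Δ M A := by
  refine Atom.rec (motive_1 := fun Γ Ω Δ M A _ => Q1 Sg Γ Ω Δ M A)
      (motive_2 := fun Γ Ω Δ M A _ => Q2 Sg Γ Ω Δ M A)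
      ?_ ?_ ?_ ?_ ?_ ?_ ?_ ?_ ?_ ?_ h
  · exact fun hc => c_con hc
  · exact fun hm => c_idu hm
  · exact c_id1
  · exact fun _ _ _ _ => c_appu
  · exact fun _ _ _ _ => c_app0
  · exact fun hd hM hN ihM ihN => c_app1 hd hM hN ihM ihN
  · exact fun _ ih => c_atm ih
  · exact fun hy _ ih => c_lamu hy ih
  · exact fun _ _ _ => c_lam0
  · exact fun _ _ _ => c_lam1

lemma tight_canon {Γ' Ω Δ : Ctx} {M : Tm} {A : Ty}
    (h : Canon Sg Γ' Ω Δ M A) : Q2 Sg Γ' Ω Δ M A := by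
  refine Canon.rec (motive_1 := fun Γ Ω Δ M A _ => Q1 Sg Γ Ω Δ M A)
      (motive_2 := fun Γ Ω Δ M A _ => Q2 Sg Γ Ω Δ M A)
      ?_ ?_ ?_ ?_ ?_ ?_ ?_ ?_ ?_ ?_ h
  · exact fun hc => c_con hc
  · exact fun hm => c_idu hm
  · exact c_id1
  · exact fun _ _ _ _ => c_appu
  · exact fun _ _ _ _ => c_app0
  · exact fun hd hM hN ihM ihN => c_app1 hd hM hN ihM ihN
  · exact fun _ ih => c_atm ih
  · exact fun hy _ ih => c_lamu hy ih
  · exact fun _ _ _ => c_lam0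
  · exact fun _ _ _ => c_lam1

end Tight


/-- **Tightening.**  Let `M` be a simple term (with no existential variables).
    (1) If `(Γ, x:C); Ω; Δ ⊢ M ↓ A`, then either `Γ; Ω; (Δ, x:C) ⊢ M ↓ A`
        or `Γ; (Ω, x:C); Δ ⊢ M ↓ A`.
    (2) If `(Γ, x:C); Ω; Δ ⊢ M ⇑ A`, then either `Γ; Ω; (Δ, x:C) ⊢ M ⇑ A`
        or `Γ; (Ω, x:C); Δ ⊢ M ⇑ A`.
    That is, every simple term is either strict or vacuous in each of its
    unrestricted variables. -/
theorem tightening (Sg : ℕ → Option Ty) :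
    (∀ (M : Tm), IsSimple M →
      ∀ (Γ Ω Δ : Ctx) (x : ℕ) (C A : Ty), x ∉ Ctx.names (Γ ∪ Ω ∪ Δ) →
        Atom Sg (insert (x, C) Γ) Ω Δ M A →
        (Atom Sg Γ Ω (insert (x, C) Δ) M A ∨
         Atom Sg Γ (insert (x, C) Ω) Δ M A)) ∧
    (∀ (M : Tm), IsSimple M →
      ∀ (Γ Ω Δ : Ctx) (x : ℕ) (C A : Ty), x ∉ Ctx.names (Γ ∪ Ω ∪ Δ) →
        Canon Sg (insert (x, C) Γ) Ω Δ M A →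
        (Canon Sg Γ Ω (insert (x, C) Δ) M A ∨
         Canon Sg Γ (insert (x, C) Ω) Δ M A)) := by
  constructor
  · intro M hS Γ Ω Δ x C A hx h
    exact Tight.tight_atom h Γ x C rfl hx hS
  · intro M hS Γ Ω Δ x C A hx h
    exact Tight.tight_canon h Γ x C rfl hx hS
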